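/- Let φ be a linear threshold function on m input bits represented by weights w ∈ ℤ^m and threshold θ ∈ ℤ, and let S be the set of inputs on which φ evaluates to 1. Then there is a decision tree computing φ whose number of leaves is at most |S|·m + 1; consequently the set S can be enumerated in time |S|·poly(m) (assuming weights of poly(m) bit complexity). -/

import Mathlib

/-- Binary decision trees over `m` Boolean variables, with ±1 leaves encoded as
`Bool` (`true` = 1, `false` = -1). -/
inductive DTree (m : ℕ) : Type
  | leaf (b : Bool)
  | node (i : Fin m) (t0 t1 : DTree m)

/-- Evaluation of a decision tree: at a node querying variable `i`, follow the
subtree corresponding to the value of `x i`. -/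
def DTree.eval {m : ℕ} : DTree m → (Fin m → Bool) → Bool
  | .leaf b, _ => b
  | .node i t0 t1, x => if x i then t1.eval x else t0.eval x

/-- Number of leaves of a decision tree. -/
def DTree.leaves {m : ℕ} : DTree m → ℕ
  | .leaf _ => 1
  | .node _ t0 t1 => t0.leaves + t1.leaves

open Classical in
/-- Build the pruned decision tree over remaining variables `l`. -/
noncomputable def buildDT {m : ℕ} (f : (Fin m → Bool) → Bool) :
    List (Fin m) → (Fin m → Bool) → DTree m
  | [], ρ => .leaf (f ρ)
  | i :: rest, ρ =>
    if (∃ x, (∀ j, j ∉ i :: rest → x j = ρ j) ∧ f x = true) then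
      if (∃ x, (∀ j, j ∉ i :: rest → x j = ρ j) ∧ f x = false) then
        .node i (buildDT f rest (Function.update ρ i false))
                (buildDT f rest (Function.update ρ i true))
      else .leaf true
    else .leaf false

lemma buildDT_eval {m : ℕ} (f : (Fin m → Bool) → Bool) :
    ∀ (l : List (Fin m)) (ρ x : Fin m → Bool), (∀ j, j ∉ l → x j = ρ j) →
      (buildDT f l ρ).eval x = f x
  | [], ρ, x, h => by
      have hx : x = ρ := funext fun j => h j List.not_mem_nil
      simp [buildDT, DTree.eval, hx]
  | i :: rest, ρ, x, h => by
      rw [buildDT]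
      split_ifs with h1 h2
      · show (DTree.node i _ _).eval x = f x
        simp only [DTree.eval]
        by_cases hx : x i
        · rw [if_pos hx]
          apply buildDT_eval f rest _ x
          intro j hj
          rcases eq_or_ne j i with rfl | hne
          · simp [hx]
          · rw [Function.update_of_ne hne]
            exact h j (by simp [hj, hne])
        · rw [if_neg hx]
          apply buildDT_eval f rest _ x
          intro j hj
          rcases eq_or_ne j i with rfl | hne
          · simp [Bool.eq_false_iff.mpr hx]
          · rw [Function.update_of_ne hne]
            exact h j (by simp [hj, hne])
      · show (DTree.leaf true).eval x = f x
        push_neg at h2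
        have := h2 x h
        simp [DTree.eval]
        cases hf : f x with
        | false => exact absurd hf this
        | true => rfl
      · show (DTree.leaf false).eval x = f x
        push_neg at h1
        have := h1 x h
        simp [DTree.eval]
        cases hf : f x with
        | false => rfl
        | true => exact absurd hf this

lemma buildDT_leaves {m : ℕ} (f : (Fin m → Bool) → Bool) :
    ∀ (l : List (Fin m)), l.Nodup → ∀ ρ : Fin m → Bool,
      (buildDT f l ρ).leaves ≤
        {x : Fin m → Bool | (∀ j, j ∉ l → x j = ρ j) ∧ f x = true}.ncard * l.length + 1
  | [], _, ρ => by simp [buildDT, DTree.leaves]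
  | i :: rest, hnd, ρ => by
      have hi : i ∉ rest := (List.nodup_cons.mp hnd).1
      have hrest : rest.Nodup := (List.nodup_cons.mp hnd).2
      rw [buildDT]
      split_ifs with h1 h2
      · show (DTree.node i _ _).leaves ≤ _
        simp only [DTree.leaves]
        set S : Set (Fin m → Bool) :=
          {x | (∀ j, j ∉ i :: rest → x j = ρ j) ∧ f x = true} with hS
        have key : ∀ b : Bool,
            {x : Fin m → Bool | (∀ j, j ∉ rest → x j = Function.update ρ i b j) ∧ f x = true}
              = S ∩ {x | x i = b} := by
          intro b
          ext x
          constructor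
          · rintro ⟨hag, hfx⟩
            have hxi : x i = b := by
              have := hag i hi
              simpa using this
            refine ⟨⟨?_, hfx⟩, hxi⟩
            intro j hj
            have hji : j ≠ i := fun h => hj (h ▸ (List.mem_cons_self : i ∈ i :: rest))
            have hjr : j ∉ rest := fun h => hj (List.mem_cons_of_mem i h)
            have := hag j hjr
            rwa [Function.update_of_ne hji] at this
          · rintro ⟨⟨hag, hfx⟩, hxi⟩
            refine ⟨?_, hfx⟩
            intro j hj
            rcases eq_or_ne j i with rfl | hne
            · simpa using hxi
            · rw [Function.update_of_ne hne]
              exact hag j (by simp [hj, hne])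
        have hL0 := buildDT_leaves f rest hrest (Function.update ρ i false)
        have hL1 := buildDT_leaves f rest hrest (Function.update ρ i true)
        rw [key false] at hL0
        rw [key true] at hL1
        have hunion : S = (S ∩ {x | x i = false}) ∪ (S ∩ {x | x i = true}) := by
          ext x
          simp only [Set.mem_union, Set.mem_inter_iff, Set.mem_setOf_eq]
          cases hx : x i <;> tauto
        have hdisj : Disjoint (S ∩ {x | x i = false}) (S ∩ {x | x i = true}) := by
          rw [Set.disjoint_left]
          rintro x ⟨-, h0⟩ ⟨-, h1⟩
          simp only [Set.mem_setOf_eq] at h0 h1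
          rw [h0] at h1; exact Bool.noConfusion h1
        have hcard : S.ncard = (S ∩ {x | x i = false}).ncard + (S ∩ {x | x i = true}).ncard := by
          conv_lhs => rw [hunion]
          exact Set.ncard_union_eq hdisj (Set.toFinite _) (Set.toFinite _)
        have hpos : 1 ≤ S.ncard := by
          obtain ⟨x, hx⟩ := h1
          have : S.Nonempty := ⟨x, hx⟩
          exact (Set.ncard_pos (Set.toFinite _)).mpr this
        have hlen : (i :: rest).length = rest.length + 1 := rfl
        rw [hlen]
        set k := rest.length
        set N0 := (S ∩ {x | x i = false}).ncard
        set N1 := (S ∩ {x | x i = true}).ncard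
        calc (buildDT f rest (Function.update ρ i false)).leaves
              + (buildDT f rest (Function.update ρ i true)).leaves
            ≤ (N0 * k + 1) + (N1 * k + 1) := Nat.add_le_add hL0 hL1
          _ ≤ S.ncard * (k + 1) + 1 := by
              rw [hcard] at hpos ⊢; nlinarith
      · show (DTree.leaf true).leaves ≤ _
        simp [DTree.leaves]
      · show (DTree.leaf false).leaves ≤ _
        simp [DTree.leaves]

/-- for the linear threshold function `φ(x) = sgn(⟨w,x⟩ − θ)` (with
`sgn 0 = -1`, i.e. `φ x = true` iff `θ < ⟨w,x⟩`) on `m` bits with integer weights,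
there is a decision tree computing `φ` with at most `|S|·m + 1` leaves, where
`S` is the set of inputs on which `φ` evaluates to 1. -/
theorem stmt_11 (m : ℕ) (w : Fin m → ℤ) (θ : ℤ) :
    ∃ T : DTree m,
      (∀ x : Fin m → Bool,
        T.eval x = decide (θ < ∑ i, w i * (if x i then 1 else -1))) ∧
      T.leaves ≤
        Set.ncard {x : Fin m → Bool |
          θ < ∑ i, w i * (if x i then 1 else -1)} * m + 1 := by
  set f : (Fin m → Bool) → Bool :=
    fun x => decide (θ < ∑ i, w i * (if x i then 1 else -1)) with hf
  refine ⟨buildDT f (List.finRange m) (fun _ => false), ?_, ?_⟩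
  · intro x
    exact buildDT_eval f (List.finRange m) _ x
      (fun j hj => absurd (List.mem_finRange j) hj)
  · have := buildDT_leaves f (List.finRange m) (List.nodup_finRange m) (fun _ => false)
    have hset : {x : Fin m → Bool |
        (∀ j, j ∉ List.finRange m → x j = false) ∧ f x = true}
        = {x : Fin m → Bool | θ < ∑ i, w i * (if x i then 1 else -1)} := by
      ext x
      simp [hf, List.mem_finRange]
    rw [hset, List.length_finRange] at this
    exact this
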